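/- arXiv:math/0601614 — 3 statements merged into one kernel-verified Lean document; each statement's English description precedes it below -/
import Mathlib

section
/- If y satisfies the second Painlevé equation P2(α): y'' = 2y³ + ty + α, then the function p := y² + y' + t/2 satisfies P34((α + 1/2)²): p'' = (p')²/(2p) + 2p² − tp − (α + 1/2)²/(2p), wherever p ≠ 0. -/
/-- If `y` solves P2(α) then `p = y² + y' + t/2` solves P34((α+1/2)²) wherever `p ≠ 0`. -/
theorem P2_to_P34 (α : ℂ) (y : ℂ → ℂ) (hy : ContDiff ℂ 3 y)
    (heq : ∀ t : ℂ, deriv (deriv y) t = 2 * y t ^ 3 + t * y t + α) :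
    ∀ t : ℂ, (y t ^ 2 + deriv y t + t / 2) ≠ 0 →
      deriv (deriv (fun s : ℂ => y s ^ 2 + deriv y s + s / 2)) t
        = (deriv (fun s : ℂ => y s ^ 2 + deriv y s + s / 2) t) ^ 2
            / (2 * (y t ^ 2 + deriv y t + t / 2))
          + 2 * (y t ^ 2 + deriv y t + t / 2) ^ 2
          - t * (y t ^ 2 + deriv y t + t / 2)
          - (α + 1 / 2) ^ 2 / (2 * (y t ^ 2 + deriv y t + t / 2)) := by
  have hdy : Differentiable ℂ y := hy.differentiable (by norm_num)
  have hdy' : Differentiable ℂ (deriv y) := by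
    have h : ContDiff ℂ (1 + 1) y := hy.of_le (by norm_num)
    rw [contDiff_succ_iff_deriv] at h
    exact h.2.2.differentiable (by norm_num)
  have hdy'' : Differentiable ℂ (deriv (deriv y)) := by
    have : deriv (deriv y) = fun s => 2 * y s ^ 3 + s * y s + α := funext heq
    rw [this]
    fun_prop
  have hp' : ∀ t : ℂ, deriv (fun s : ℂ => y s ^ 2 + deriv y s + s / 2) t
      = 2 * y t * deriv y t + deriv (deriv y) t + 1 / 2 := by
    intro t
    have h1 : HasDerivAt (fun s : ℂ => y s ^ 2 + deriv y s + s / 2)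
        (2 * y t * deriv y t + deriv (deriv y) t + 1 / 2) t := by
      have ha : HasDerivAt y (deriv y t) t := (hdy t).hasDerivAt
      have hb : HasDerivAt (deriv y) (deriv (deriv y) t) t := (hdy' t).hasDerivAt
      have := ((ha.pow 2).add hb).add ((hasDerivAt_id t).div_const 2)
      convert this using 1
      · rfl
      · rfl
      · rfl
      · norm_num
    exact h1.deriv
  intro t hp
  have hfun : deriv (fun s : ℂ => y s ^ 2 + deriv y s + s / 2)
      = fun s => 2 * y s * deriv y s + (2 * y s ^ 3 + s * y s + α) + 1 / 2 :=
    funext fun s => by rw [hp' s, heq s]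
  have h2 : deriv (deriv (fun s : ℂ => y s ^ 2 + deriv y s + s / 2)) t
      = 2 * (deriv y t * deriv y t + y t * (2 * y t ^ 3 + t * y t + α))
        + (6 * y t ^ 2 * deriv y t + (y t + t * deriv y t)) := by
    rw [hfun]
    have ha : HasDerivAt y (deriv y t) t := (hdy t).hasDerivAt
    have hb : HasDerivAt (deriv y) (deriv (deriv y) t) t := (hdy' t).hasDerivAt
    have hD : HasDerivAt (fun s : ℂ => 2 * y s * deriv y s + (2 * y s ^ 3 + s * y s + α) + 1 / 2)
        (2 * (deriv y t * deriv y t + y t * (2 * y t ^ 3 + t * y t + α))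
          + (6 * y t ^ 2 * deriv y t + (y t + t * deriv y t))) t := by
      have h1 : HasDerivAt (fun s : ℂ => 2 * y s * deriv y s)
          (2 * (deriv y t * deriv y t + y t * deriv (deriv y) t)) t := by
        have := (ha.mul hb).const_mul (2:ℂ)
        convert this using 1
        · rfl
        · rfl
        · funext s; rw [Pi.mul_apply]; ring
      have h3 : HasDerivAt (fun s : ℂ => 2 * y s ^ 3 + s * y s + α)
          (6 * y t ^ 2 * deriv y t + (y t + t * deriv y t)) t := by
        have := (((ha.pow 3).const_mul (2:ℂ)).add ((hasDerivAt_id t).mul ha)).add_const α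
        convert this using 1
        · rfl
        · rfl
        · rfl
        · simp only [id_eq]; norm_num; ring
      have := (h1.add h3).add_const (1/2 : ℂ)
      rw [heq t] at this
      exact this
    exact hD.deriv
  rw [h2, hp' t, heq t]
  have h2P : (2:ℂ) * (y t ^ 2 + deriv y t + t / 2) ≠ 0 := mul_ne_zero two_ne_zero hp
  apply mul_right_cancel₀ h2P
  conv_rhs => rw [sub_mul, sub_mul, add_mul, div_mul_cancel₀ _ h2P, div_mul_cancel₀ _ h2P]
  ring
end

section
/- If p satisfies the thirty-fourth Painlevé equation P34(α): p'' = (p')²/(2p) + 2p² − tp − α/(2p) with p nowhere vanishing, and s is a square root of α (s² = α), then q := (p' − s)/(2p) satisfies the second Painlevé equation P2(s − 1/2): q'' = 2q³ + tq + (s − 1/2). -/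
/-- If `p` solves P34(α), `p` is nonvanishing, and `s² = α`, then
`q = (p' − s)/(2p)` solves P2(s − 1/2). -/
theorem P34_to_P2 (α s : ℂ) (hs : s ^ 2 = α) (p : ℂ → ℂ)
    (hp : ContDiff ℂ 3 p) (hpne : ∀ t : ℂ, p t ≠ 0)
    (heq : ∀ t : ℂ, deriv (deriv p) t
      = (deriv p t) ^ 2 / (2 * p t) + 2 * p t ^ 2 - t * p t - α / (2 * p t)) :
    ∀ t : ℂ,
      deriv (deriv (fun u : ℂ => (deriv p u - s) / (2 * p u))) t
        = 2 * ((deriv p t - s) / (2 * p t)) ^ 3 + t * ((deriv p t - s) / (2 * p t))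
          + (s - 1 / 2) := by
  intro t
  have hd0 : Differentiable ℂ p := hp.differentiable (by norm_num)
  have hc2 : ContDiff ℂ 2 (deriv p) := by
    have h : ContDiff ℂ ((2 : WithTop ℕ∞) + 1) p := by
      have e : ((2 : WithTop ℕ∞) + 1) = 3 := by norm_num
      rw [e]; exact hp
    exact (contDiff_succ_iff_deriv.mp h).2.2
  have hd1 : Differentiable ℂ (deriv p) := hc2.differentiable (by norm_num)
  have hc1 : ContDiff ℂ 1 (deriv (deriv p)) := by
    have h : ContDiff ℂ ((1 : WithTop ℕ∞) + 1) (deriv p) := by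
      have e : ((1 : WithTop ℕ∞) + 1) = 2 := by norm_num
      rw [e]; exact hc2
    exact (contDiff_succ_iff_deriv.mp h).2.2
  have hd2 : Differentiable ℂ (deriv (deriv p)) := hc1.differentiable (by norm_num)
  have hne : ∀ u : ℂ, 2 * p u ≠ 0 := fun u => mul_ne_zero two_ne_zero (hpne u)
  -- first derivative of q
  have hQ : ∀ u : ℂ, HasDerivAt (fun v : ℂ => (deriv p v - s) / (2 * p v))
      ((deriv (deriv p) u * (2 * p u) - (deriv p u - s) * (2 * deriv p u)) / (2 * p u) ^ 2) u := by
    intro u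
    exact ((hd1 u).hasDerivAt.sub_const s).div ((hd0 u).hasDerivAt.const_mul 2) (hne u)
  have hq1 : deriv (fun v : ℂ => (deriv p v - s) / (2 * p v))
      = fun u : ℂ => (deriv (deriv p) u * (2 * p u) - (deriv p u - s) * (2 * deriv p u))
          / (2 * p u) ^ 2 := funext fun u => (hQ u).deriv
  -- third derivative of p from differentiating the equation
  have key : deriv (deriv (deriv p)) t
      = ((2 : ℂ) * deriv p t ^ 1 * deriv (deriv p) t * (2 * p t)
          - deriv p t ^ 2 * (2 * deriv p t)) / (2 * p t) ^ 2
        + 2 * ((2 : ℂ) * p t ^ 1 * deriv p t)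
        - (1 * p t + t * deriv p t)
        - (0 * (2 * p t) - α * (2 * deriv p t)) / (2 * p t) ^ 2 := by
    have hfun : deriv (deriv p)
        = fun u : ℂ => (deriv p u) ^ 2 / (2 * p u) + 2 * p u ^ 2 - u * p u - α / (2 * p u) :=
      funext heq
    conv_lhs => rw [hfun]
    have t1 : HasDerivAt (fun u : ℂ => (deriv p u) ^ 2 / (2 * p u))
        (((2 : ℂ) * deriv p t ^ 1 * deriv (deriv p) t * (2 * p t)
          - deriv p t ^ 2 * (2 * deriv p t)) / (2 * p t) ^ 2) t :=
      ((hd1 t).hasDerivAt.pow 2).div ((hd0 t).hasDerivAt.const_mul 2) (hne t)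
    have t2 : HasDerivAt (fun u : ℂ => 2 * p u ^ 2)
        (2 * ((2 : ℂ) * p t ^ 1 * deriv p t)) t :=
      ((hd0 t).hasDerivAt.pow 2).const_mul 2
    have t3 : HasDerivAt (fun u : ℂ => u * p u) (1 * p t + t * deriv p t) t :=
      (hasDerivAt_id t).mul (hd0 t).hasDerivAt
    have t4 : HasDerivAt (fun u : ℂ => α / (2 * p u))
        ((0 * (2 * p t) - α * (2 * deriv p t)) / (2 * p t) ^ 2) t :=
      (hasDerivAt_const t α).div ((hd0 t).hasDerivAt.const_mul 2) (hne t)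
    exact (((t1.add t2).sub t3).sub t4).deriv
  -- second derivative of q
  have hN : HasDerivAt (fun u : ℂ =>
      deriv (deriv p) u * (2 * p u) - (deriv p u - s) * (2 * deriv p u))
      ((deriv (deriv (deriv p)) t * (2 * p t) + deriv (deriv p) t * (2 * deriv p t))
        - ((deriv (deriv p) t * (2 * deriv p t)) + (deriv p t - s) * (2 * deriv (deriv p) t))) t :=
    ((hd2 t).hasDerivAt.mul ((hd0 t).hasDerivAt.const_mul 2)).sub
      (((hd1 t).hasDerivAt.sub_const s).mul ((hd1 t).hasDerivAt.const_mul 2))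
  have hD : HasDerivAt (fun u : ℂ => (2 * p u) ^ 2)
      ((2 : ℂ) * (2 * p t) ^ 1 * (2 * deriv p t)) t :=
    ((hd0 t).hasDerivAt.const_mul 2).pow 2
  have hDne : (2 * p t) ^ 2 ≠ 0 := pow_ne_zero 2 (hne t)
  have hQ2 : HasDerivAt (fun u : ℂ =>
      (deriv (deriv p) u * (2 * p u) - (deriv p u - s) * (2 * deriv p u)) / (2 * p u) ^ 2)
      ((((deriv (deriv (deriv p)) t * (2 * p t) + deriv (deriv p) t * (2 * deriv p t))
        - ((deriv (deriv p) t * (2 * deriv p t)) + (deriv p t - s) * (2 * deriv (deriv p) t)))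
        * (2 * p t) ^ 2
        - (deriv (deriv p) t * (2 * p t) - (deriv p t - s) * (2 * deriv p t))
          * ((2 : ℂ) * (2 * p t) ^ 1 * (2 * deriv p t))) / ((2 * p t) ^ 2) ^ 2) t :=
    hN.div hD hDne
  rw [hq1, hQ2.deriv, key, heq t, ← hs]
  field_simp [hpne t]
  ring_nf
end

section
/- If (q, p) is a solution of the Hamiltonian system t·q' = 2pq² − q² + (α₁ + β₁)q + t, t·p' = −2p²q + 2pq − (α₁ + β₁)p + α₁ (with Hamiltonian t·H = q²p² − (q² − (α₁+β₁)q − t)p − α₁q), then q satisfies the third Painlevé equation P3'(4(α₁ − β₁), −4(α₁ + β₁ − 1), 4, −4): q'' = (q')²/q − q'/t + (4(α₁−β₁)q² + 4q³)/(4t²) + (−4(α₁+β₁−1))/(4t) + (−4)/(4q), i.e. q'' = (q')²/q − q'/t + ((α₁−β₁)q² + q³)/t² − (α₁+β₁−1)/t − 1/q. -/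
/-- Eliminating `p` from the Hamiltonian system H'_{D6} yields the third
Painlevé equation P3'(4(α₁−β₁), −4(α₁+β₁−1), 4, −4). -/
theorem D6_system_gives_P3' (α₁ β₁ : ℂ) (q p : ℂ → ℂ)
    (hq : Differentiable ℂ q) (hp : Differentiable ℂ p)
    (heq1 : ∀ t : ℂ, t * deriv q t
      = 2 * p t * q t ^ 2 - q t ^ 2 + (α₁ + β₁) * q t + t)
    (heq2 : ∀ t : ℂ, t * deriv p t
      = -2 * p t ^ 2 * q t + 2 * p t * q t - (α₁ + β₁) * p t + α₁) :
    ∀ t : ℂ, t ≠ 0 → q t ≠ 0 →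
      deriv (deriv q) t
        = (deriv q t) ^ 2 / q t - deriv q t / t
          + ((α₁ - β₁) * q t ^ 2 + q t ^ 3) / t ^ 2
          - (α₁ + β₁ - 1) / t - 1 / q t := by
  intro t ht hqt
  set F : ℂ → ℂ := fun s => 2 * p s * q s ^ 2 - q s ^ 2 + (α₁ + β₁) * q s + s with hFdef
  have hq' := (hq t).hasDerivAt
  have hp' := (hp t).hasDerivAt
  set Q := q t
  set P := p t
  set Q' := deriv q t
  set P' := deriv p t
  have hFd : HasDerivAt F
      (2 * P' * Q ^ 2 + 4 * P * Q * Q' - 2 * Q * Q' + (α₁ + β₁) * Q' + 1) t := by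
    have h : HasDerivAt F
        ((2 * P' * Q ^ 2 + 2 * P * (2 * Q ^ 1 * Q')) - 2 * Q ^ 1 * Q'
          + (α₁ + β₁) * Q' + 1) t := by
      exact ((((hp'.const_mul 2).mul (hq'.pow 2)).sub (hq'.pow 2)).add
        (hq'.const_mul (α₁ + β₁))).add (hasDerivAt_id t)
    convert h using 1; ring
  have hdiv : HasDerivAt (fun s => F s / s)
      (((2 * P' * Q ^ 2 + 4 * P * Q * Q' - 2 * Q * Q' + (α₁ + β₁) * Q' + 1) * t
        - F t * 1) / t ^ 2) t := hFd.div (hasDerivAt_id t) ht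
  have hev : deriv q =ᶠ[nhds t] fun s => F s / s := by
    have hmem : {s : ℂ | s ≠ 0} ∈ nhds t :=
      isOpen_compl_singleton.mem_nhds (by simpa using ht)
    filter_upwards [hmem] with s hs
    rw [eq_div_iff hs]
    linear_combination heq1 s
  have hD : deriv (deriv q) t
      = ((2 * P' * Q ^ 2 + 4 * P * Q * Q' - 2 * Q * Q' + (α₁ + β₁) * Q' + 1) * t
        - F t * 1) / t ^ 2 := by
    rw [hev.deriv_eq]
    exact hdiv.deriv
  rw [hD]
  have e1 := heq1 t
  have e2 := heq2 t
  simp only [hFdef]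
  field_simp
  linear_combination (2 * Q ^ 3) * e2
    + ((2 * P * Q ^ 2 - Q ^ 2 + Q - t * Q' - t)) * e1
end
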